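/- arXiv:2012.14527 — 2 statements merged into one kernel-verified Lean document; each statement's English description precedes it below -/
import Mathlib

section
/- Let d ≥ 2 and let l be a point of the unsquared measurement variety L_{d,n} ⊆ ℂ^N that is generic over ℚ. If α ∈ ℚ^N is a rational length functional with ⟨α, l⟩ = 0 (i.e., Σ_{ij} α^{ij} l_{ij} = 0), then α = 0. -/
open MvPolynomial

noncomputable section

/-- Edges of the complete graph on `n` vertices, as ordered pairs `i < j`. -/
abbrev Edge (n : ℕ) := {e : Fin n × Fin n // e.1 < e.2}

/-- The unsquared measurement variety `L_{d,n}`: vectors indexed by edges whose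
coordinatewise squares are the complex squared distances of some configuration
of `n` points in `ℂ^d`. -/
def Ldn (d n : ℕ) : Set (Edge n → ℂ) :=
  {x | ∃ q : Fin n → Fin d → ℂ,
    ∀ e : Edge n, (x e) ^ 2 = ∑ a, (q e.1.1 a - q e.1.2 a) ^ 2}

/-- For `d ≥ 2`: if `l` is generic over `ℚ` in `L_{d,n}` and a rational length
functional `α` satisfies `⟨α, l⟩ = 0`, then `α = 0`. -/
theorem stmt15 {d n : ℕ} (hd : 2 ≤ d)
    (l : Edge n → ℂ) (hl : l ∈ Ldn d n)
    (hgen : ∀ f : MvPolynomial (Edge n) ℚ,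
      eval l (map (algebraMap ℚ ℂ) f) = 0 →
      ∀ x ∈ Ldn d n, eval x (map (algebraMap ℚ ℂ) f) = 0)
    (α : Edge n → ℚ)
    (hα : ∑ e, (α e : ℂ) * l e = 0) :
    α = 0 := by
  have hdpos : 0 < d := by omega
  set a0 : Fin d := ⟨0, hdpos⟩ with ha0
  -- the linear polynomial
  set f : MvPolynomial (Edge n) ℚ := ∑ e, C (α e) * X e with hf
  have heval : ∀ x : Edge n → ℂ,
      eval x (map (algebraMap ℚ ℂ) f) = ∑ e, (α e : ℂ) * x e := by
    intro x
    simp [hf, map_sum, eval_sum, algebraMap]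
  have hvan : ∀ x ∈ Ldn d n, ∑ e, (α e : ℂ) * x e = 0 := by
    intro x hx
    have := hgen f (by rw [heval]; exact hα) x hx
    rwa [heval] at this
  -- a special point with all coordinates nonzero
  set q : Fin n → Fin d → ℂ := fun i a => if a = a0 then (i : ℂ) else 0 with hq
  set x : Edge n → ℂ := fun e => (e.1.1 : ℂ) - (e.1.2 : ℂ) with hxdef
  have hsq : ∀ e : Edge n, (x e) ^ 2 = ∑ a, (q e.1.1 a - q e.1.2 a) ^ 2 := by
    intro e
    have : ∀ a : Fin d, (q e.1.1 a - q e.1.2 a) ^ 2 =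
        if a = a0 then ((e.1.1 : ℂ) - (e.1.2 : ℂ)) ^ 2 else 0 := by
      intro a
      by_cases h : a = a0 <;> simp [hq, h]
    rw [Finset.sum_congr rfl (fun a _ => this a), Finset.sum_ite_eq' Finset.univ a0]
    simp [hxdef]
  have hxmem : x ∈ Ldn d n := ⟨q, hsq⟩
  have hxne : ∀ e : Edge n, x e ≠ 0 := by
    intro e
    have hlt : (e.1.1 : ℕ) < (e.1.2 : ℕ) := e.2
    simp only [hxdef, sub_ne_zero]
    intro h
    have : (e.1.1 : ℕ) = (e.1.2 : ℕ) := by exact_mod_cast h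
    omega
  funext e0
  by_contra hne
  -- flipped point
  set x' : Edge n → ℂ := Function.update x e0 (-(x e0)) with hx'
  have hx'mem : x' ∈ Ldn d n := by
    refine ⟨q, fun e => ?_⟩
    by_cases h : e = e0
    · subst h; simp [hx', neg_pow]; exact hsq e
    · rw [hx', Function.update_of_ne h]; exact hsq e
  have h1 := hvan x hxmem
  have h2 := hvan x' hx'mem
  have hdiff : ∑ e, (α e : ℂ) * x e - ∑ e, (α e : ℂ) * x' e
      = (α e0 : ℂ) * (2 * x e0) := by
    rw [← Finset.sum_sub_distrib]
    rw [Finset.sum_eq_single e0]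
    · simp [hx']; ring
    · intro e _ h
      rw [hx', Function.update_of_ne h]; ring
    · simp
  rw [h1, h2, sub_zero] at hdiff
  have : (α e0 : ℂ) = 0 := by
    rcases mul_eq_zero.mp hdiff.symm with h | h
    · exact h
    · exact absurd h (by simpa using hxne e0)
  exact hne (by exact_mod_cast this)
end
end

section
/- Let p be a generic configuration of n points in ℝ^d with d ≥ 2, let α₁, ..., α_k ∈ ℚ^N be rational length functionals, and set vᵢ = ⟨αᵢ, l(p)⟩ where l(p) is the vector of pairwise distances of p. If there exist rational coefficients c¹, ..., c^k, not all zero, with Σᵢ cⁱ vᵢ = 0, then the functionals αᵢ are linearly dependent (indeed Σᵢ cⁱ αᵢ = 0). -/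
open MvPolynomial

noncomputable section

namespace Stmt16Aux

/-! ### Polynomial part: the norm over all sign flips is a polynomial in the squares -/

variable {ι : Type*} [DecidableEq ι]

def flip (e0 : ι) : MvPolynomial ι ℚ →ₐ[ℚ] MvPolynomial ι ℚ :=
  aeval (fun e => if e = e0 then -X e else X e)

lemma flip_X (e0 e : ι) : flip e0 (X e) = if e = e0 then -X e else X e := aeval_X _ e

lemma flip_C (e0 : ι) (a : ℚ) : flip e0 (C a) = C a := by rw [flip, aeval_C, algebraMap_eq]

lemma flip_monomial (e0 : ι) (m : ι →₀ ℕ) (a : ℚ) :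
    flip e0 (monomial m a) = ((-1 : ℚ) ^ (m e0)) • monomial m a := by
  rw [monomial_eq, map_mul, flip_C, Finsupp.prod, map_prod]
  have hfac : ∀ e ∈ m.support, (flip e0) (X e ^ m e)
      = C ((-1:ℚ) ^ (if e = e0 then m e else 0)) * X e ^ m e := by
    intro e _
    rw [map_pow, flip_X]
    by_cases he : e = e0
    · rw [if_pos he, if_pos he, neg_pow, ← C_1, ← C_neg, ← C_pow]
    · rw [if_neg he, if_neg he, pow_zero, C_1, one_mul]
  rw [Finset.prod_congr rfl hfac, Finset.prod_mul_distrib, ← map_prod,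
    Finset.prod_pow_eq_pow_sum]
  have hsum : (∑ e ∈ m.support, if e = e0 then m e else 0) = m e0 := by
    rw [Finset.sum_ite_eq' m.support e0 m]
    by_cases h : e0 ∈ m.support
    · rw [if_pos h]
    · rw [if_neg h, Finsupp.notMem_support_iff.1 h]
  rw [hsum, smul_eq_C_mul, C_pow, C_neg, C_1]
  ring

lemma coeff_flip (e0 : ι) (F : MvPolynomial ι ℚ) (m : ι →₀ ℕ) :
    coeff m (flip e0 F) = (-1 : ℚ) ^ (m e0) * coeff m F := by
  have h := F.support_sum_monomial_coeff
  conv_lhs => rw [← h]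
  rw [map_sum]
  have : ∀ m' ∈ F.support, (flip e0) (monomial m' (coeff m' F))
      = ((-1:ℚ) ^ (m' e0)) • monomial m' (coeff m' F) := fun m' _ => flip_monomial e0 m' _
  rw [Finset.sum_congr rfl this]
  rw [coeff_sum]
  simp only [coeff_smul, coeff_monomial, smul_eq_mul]
  rw [Finset.sum_eq_single m]
  · by_cases hm : m ∈ F.support
    · rw [if_pos rfl]
    · rw [if_pos rfl, notMem_support_iff.1 hm]
  · intro b _ hb
    rw [if_neg hb, mul_zero]
  · intro hm
    simp [notMem_support_iff.1 hm]

lemma even_of_flip_invariant (F : MvPolynomial ι ℚ)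
    (h : ∀ e0, flip e0 F = F) (m : ι →₀ ℕ) (hm : m ∈ F.support) (e : ι) : Even (m e) := by
  by_contra hodd
  have h1 := coeff_flip e F m
  rw [h e] at h1
  rw [(Nat.not_even_iff_odd.mp hodd).neg_one_pow] at h1
  have : coeff m F = 0 := by linarith
  exact (mem_support_iff.1 hm) this

omit [DecidableEq ι] in
lemma exists_bind_sq (F : MvPolynomial ι ℚ)
    (h : ∀ m ∈ F.support, ∀ e, Even (m e)) :
    ∃ G : MvPolynomial ι ℚ, bind₁ (fun e => (X e : MvPolynomial ι ℚ) ^ 2) G = F := by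
  refine ⟨∑ m ∈ F.support, monomial (m.mapRange (· / 2) (Nat.zero_div 2)) (coeff m F), ?_⟩
  rw [map_sum]
  have key : ∀ m ∈ F.support,
      bind₁ (fun e => (X e : MvPolynomial ι ℚ) ^ 2)
        (monomial (m.mapRange (· / 2) (Nat.zero_div 2)) (coeff m F))
        = monomial m (coeff m F) := by
    intro m hm
    rw [bind₁_monomial]
    have hsupp : (m.mapRange (· / 2) (Nat.zero_div 2)).support = m.support := by
      ext i
      simp only [Finsupp.mem_support_iff, Finsupp.mapRange_apply]
      constructor
      · intro hi hc; exact hi (by rw [hc]; rfl)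
      · intro hi
        obtain ⟨r, hr⟩ := h m hm i
        intro hc
        apply hi
        omega
    rw [hsupp]
    have hfac : ∀ i ∈ m.support,
        ((X i : MvPolynomial ι ℚ) ^ 2) ^ ((m.mapRange (· / 2) (Nat.zero_div 2)) i)
          = X i ^ m i := by
      intro i _
      rw [← pow_mul]
      congr 1
      obtain ⟨r, hr⟩ := h m hm i
      simp only [Finsupp.mapRange_apply]
      omega
    rw [Finset.prod_congr rfl hfac, monomial_eq, Finsupp.prod]
  rw [Finset.sum_congr rfl key, support_sum_monomial_coeff]

variable [Fintype ι]

/-- sign of an edge relative to a sign pattern given by a set -/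
def sg (T : Finset ι) (e : ι) : ℚ := if e ∈ T then -1 else 1

def Fprod (β : ι → ℚ) : MvPolynomial ι ℚ :=
  ∏ T : Finset ι, (∑ e : ι, C (sg T e * β e) * X e)

lemma flip_Fprod (β : ι → ℚ) (e0 : ι) : flip e0 (Fprod β) = Fprod β := by
  rw [Fprod, map_prod]
  have hfac : ∀ T : Finset ι, flip e0 (∑ e : ι, C (sg T e * β e) * X e)
      = ∑ e : ι, C (sg (symmDiff T {e0}) e * β e) * X e := by
    intro T
    rw [map_sum]
    refine Finset.sum_congr rfl fun e _ => ?_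
    rw [map_mul, flip_C, flip_X]
    by_cases he : e = e0
    · subst he
      rw [if_pos rfl, mul_neg, ← neg_mul, ← C_neg]
      congr 2
      simp [sg, Finset.mem_symmDiff]
      by_cases h : e ∈ T <;> simp [h]
    · rw [if_neg he]
      congr 2
      simp only [sg, Finset.mem_symmDiff, Finset.mem_singleton]
      by_cases h : e ∈ T <;> simp [h, he]
  rw [Finset.prod_congr rfl (fun T _ => hfac T)]
  exact Equiv.prod_comp
    ⟨fun T => symmDiff T {e0}, fun T => symmDiff T {e0},
      fun T => symmDiff_symmDiff_cancel_right {e0} T,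
      fun T => symmDiff_symmDiff_cancel_right {e0} T⟩
    (fun T => ∑ e : ι, C (sg T e * β e) * X e)

/-- Key polynomial lemma: there is a rational polynomial `G` so that `G` evaluated at the
squares of any real vector `r` gives the product over all sign patterns of the
signed linear combinations of `r`. -/
lemma key_poly (β : ι → ℚ) :
    ∃ G : MvPolynomial ι ℚ, ∀ r : ι → ℝ,
      aeval (fun e => r e ^ 2) G
        = ∏ T : Finset ι, ∑ e : ι, ((sg T e * β e : ℚ) : ℝ) * r e := by
  obtain ⟨G, hG⟩ := exists_bind_sq (Fprod β)
    (even_of_flip_invariant _ (flip_Fprod β))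
  refine ⟨G, fun r => ?_⟩
  have h1 : aeval (fun e => r e ^ 2) G
      = aeval r (bind₁ (fun e => (X e : MvPolynomial ι ℚ) ^ 2) G) := by
    rw [aeval_bind₁]; simp
  rw [h1, hG, Fprod, map_prod]
  refine Finset.prod_congr rfl fun T _ => ?_
  rw [map_sum]
  refine Finset.sum_congr rfl fun e _ => ?_
  rw [map_mul, aeval_C, aeval_X]
  norm_num

end Stmt16Aux

end

set_option maxHeartbeats 1600000 in
/-- For a generic configuration `p` of `n` points in `ℝ^d` (`d ≥ 2`), a
nontrivial rational relation among the values `vᵢ = ⟨αᵢ, l(p)⟩` of rational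
length functionals forces the same relation among the functionals: `∑ cⁱαᵢ = 0`. -/
theorem stmt16 {d n k : ℕ} (hd : 2 ≤ d)
    (p : Fin n → Fin d → ℝ)
    (hgen : ∀ f : MvPolynomial (Fin n × Fin d) ℚ, f ≠ 0 →
      eval (fun x => p x.1 x.2) (map (algebraMap ℚ ℝ) f) ≠ 0)
    (α : Fin k → Edge n → ℚ)
    (v : Fin k → ℝ)
    (hv : ∀ i, v i = ∑ e, (α i e : ℝ) *
      Real.sqrt (∑ a, (p e.1.1 a - p e.1.2 a) ^ 2))
    (c : Fin k → ℚ) (hc : c ≠ 0)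
    (hrel : ∑ i, (c i : ℝ) * v i = 0) :
    ∑ i, c i • α i = 0 := by
  classical
  let p' : Fin n × Fin d → ℝ := fun x => p x.1 x.2
  let β : Edge n → ℚ := fun e => ∑ i, c i * α i e
  let qp : Edge n → MvPolynomial (Fin n × Fin d) ℚ :=
    fun e => ∑ a : Fin d, (X (e.1.1, a) - X (e.1.2, a)) ^ 2
  let qv : Edge n → ((Fin n × Fin d) → ℝ) → ℝ :=
    fun e x => ∑ a : Fin d, (x (e.1.1, a) - x (e.1.2, a)) ^ 2
  have hqp : ∀ e x, aeval x (qp e) = qv e x := by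
    intro e x; simp [qp, qv]
  have hqv0 : ∀ e x, 0 ≤ qv e x := fun e x => Finset.sum_nonneg fun a _ => sq_nonneg _
  let rr : ((Fin n × Fin d) → ℝ) → Edge n → ℝ := fun x e => Real.sqrt (qv e x)
  have hrr : ∀ x e, rr x e ^ 2 = qv e x := fun x e => Real.sq_sqrt (hqv0 e x)
  let fT : Finset (Edge n) → ((Fin n × Fin d) → ℝ) → ℝ :=
    fun T x => ∑ e, ((Stmt16Aux.sg T e * β e : ℚ) : ℝ) * rr x e
  have hgen' : ∀ f : MvPolynomial (Fin n × Fin d) ℚ, f ≠ 0 → aeval p' f ≠ 0 := by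
    intro f hf
    have h := hgen f hf
    rwa [eval_map, ← aeval_def] at h
  obtain ⟨G, hG⟩ := Stmt16Aux.key_poly β
  have hPx : ∀ x, aeval x (bind₁ qp G) = ∏ T : Finset (Edge n), fT T x := by
    intro x
    rw [aeval_bind₁]
    have h2 : (fun e => aeval x (qp e)) = fun e => rr x e ^ 2 :=
      funext fun e => by rw [hqp, hrr]
    rw [h2, hG (rr x)]
  have hzero : fT ∅ p' = 0 := by
    rw [← hrel]
    have h3 : ∀ i, (c i : ℝ) * v i
        = ∑ e, (c i : ℝ) * ((α i e : ℝ) * rr p' e) := by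
      intro i
      rw [hv i, Finset.mul_sum]
    rw [Finset.sum_congr rfl (fun i _ => h3 i), Finset.sum_comm]
    refine Finset.sum_congr rfl fun e _ => ?_
    simp only [fT, β, Stmt16Aux.sg, Finset.notMem_empty, if_neg (Finset.notMem_empty e)]
    push_cast
    rw [one_mul, Finset.sum_mul]
    refine Finset.sum_congr rfl fun i _ => ?_
    ring
  have hP0 : bind₁ qp G = 0 := by
    by_contra h
    apply hgen' _ h
    rw [hPx p']
    exact Finset.prod_eq_zero (Finset.mem_univ ∅) hzero
  have hall : ∀ x, ∏ T : Finset (Edge n), fT T x = 0 := fun x => by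
    rw [← hPx x, hP0, map_zero]
  -- Baire category: some sign pattern vanishes on an open set
  have hcont : ∀ T, Continuous (fT T) := by
    intro T
    apply continuous_finset_sum
    intro e _
    apply Continuous.mul continuous_const
    apply Real.continuous_sqrt.comp
    apply continuous_finset_sum
    intro a _
    exact ((continuous_apply ((e.1.1, a) : Fin n × Fin d)).sub
      (continuous_apply ((e.1.2, a) : Fin n × Fin d))).pow 2
  have hcover : (⋃ T : Finset (Edge n), {x | fT T x = 0}) = Set.univ := by
    ext x
    simp only [Set.mem_iUnion, Set.mem_univ, iff_true, Set.mem_setOf_eq]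
    rcases Finset.prod_eq_zero_iff.1 (hall x) with ⟨T, _, hT⟩
    exact ⟨T, hT⟩
  obtain ⟨T₀, x₀, hx₀⟩ := nonempty_interior_of_iUnion_of_closed
    (fun T : Finset (Edge n) => isClosed_eq (hcont T) continuous_const) hcover
  -- find a point of the interior where all the squared distances are nonzero
  have hqpne : ∀ e : Edge n, qp e ≠ 0 := by
    intro e he
    have hne : e.1.1 ≠ e.1.2 := ne_of_lt e.2
    have hd0 : 0 < d := by omega
    set a0 : Fin d := ⟨0, hd0⟩
    have h1 := congrArg (eval (fun w : Fin n × Fin d => if w = (e.1.1, a0) then (1:ℚ) else 0)) he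
    rw [map_zero] at h1
    rw [show qp e = ∑ a : Fin d, (X (e.1.1, a) - X (e.1.2, a)) ^ 2 from rfl] at h1
    simp only [map_sum, map_pow, map_sub, eval_X] at h1
    have h2 : ∀ a : Fin d,
        ((if ((e.1.1, a) : Fin n × Fin d) = (e.1.1, a0) then (1:ℚ) else 0)
          - (if ((e.1.2, a) : Fin n × Fin d) = (e.1.1, a0) then (1:ℚ) else 0)) ^ 2
        = if a = a0 then 1 else 0 := by
      intro a
      have hne2 : ((e.1.2, a) : Fin n × Fin d) ≠ (e.1.1, a0) :=
        fun hcontra => hne (congrArg Prod.fst hcontra).symm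
      rw [if_neg hne2, sub_zero]
      by_cases ha : a = a0
      · subst ha; rw [if_pos rfl, if_pos rfl]; norm_num
      · rw [if_neg (fun hcontra => ha (congrArg Prod.snd hcontra)), if_neg ha]
        norm_num
    rw [Finset.sum_congr rfl (fun a _ => h2 a)] at h1
    simp at h1
  have hx1 : ∃ x₁ ∈ interior {x | fT T₀ x = 0}, ∀ e, qv e x₁ ≠ 0 := by
    by_contra hcon
    push_neg at hcon
    have hU : ∀ x ∈ interior {x | fT T₀ x = 0}, aeval x (∏ e : Edge n, qp e) = (0:ℝ) := by
      intro x hx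
      obtain ⟨e, he⟩ := hcon x hx
      rw [map_prod]
      refine Finset.prod_eq_zero (Finset.mem_univ e) ?_
      rw [hqp]; exact he
    have hanal : AnalyticOnNhd ℝ (fun x : (Fin n × Fin d) → ℝ => aeval x (∏ e : Edge n, qp e))
        (Set.univ : Set ((Fin n × Fin d) → ℝ)) := by
      intro x _
      exact AnalyticAt.aeval_mvPolynomial
        (fun i => (ContinuousLinearMap.proj i : ((Fin n × Fin d) → ℝ) →L[ℝ] ℝ).analyticAt x) _
    have hzero2 := hanal.eqOn_zero_of_preconnected_of_eventuallyEq_zero isPreconnected_univ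
      (Set.mem_univ x₀)
      (Filter.eventually_of_mem (isOpen_interior.mem_nhds hx₀) hU)
    have := hzero2 (Set.mem_univ p')
    exact hgen' _ (Finset.prod_ne_zero_iff.2 fun e _ => hqpne e) this
  obtain ⟨x₁, hx₁U, hx₁q⟩ := hx1
  obtain ⟨ρ, hρ, hball⟩ := Metric.isOpen_iff.1 isOpen_interior x₁ hx₁U
  have hballZ : ∀ x, dist x x₁ < ρ → fT T₀ x = 0 := by
    intro x hx
    have hmem : x ∈ {x | fT T₀ x = 0} := interior_subset (hball (Metric.mem_ball.mpr hx))
    exact hmem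
  have possq : ∀ u w : Fin d → ℝ, u ≠ w → 0 < ∑ a : Fin d, (u a - w a) ^ 2 := by
    intro u w huw
    rcases (Finset.sum_nonneg fun (a : Fin d) _ => sq_nonneg (u a - w a)).lt_or_eq with h | h
    · exact h
    · exfalso
      apply huw
      funext a
      have h4 := (Finset.sum_eq_zero_iff_of_nonneg
        (fun (a : Fin d) _ => sq_nonneg (u a - w a))).1 h.symm a (Finset.mem_univ a)
      have h5 : u a - w a = 0 := by
        have := pow_eq_zero_iff (n := 2) (by norm_num) |>.1 h4
        exact this
      linarith
  have hβ0 : ∀ e0 : Edge n, β e0 = 0 := by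
    intro e0
    obtain ⟨⟨i0, j0⟩, hij⟩ := e0
    set E0 : Edge n := ⟨(i0, j0), hij⟩ with hE0
    have hijlt : i0 < j0 := hij
    have hijne : i0 ≠ j0 := ne_of_lt hijlt
    set pt : Fin n → Fin d → ℝ := fun m a => x₁ (m, a) with hpt
    have hedgept : ∀ e : Edge n, pt e.1.1 ≠ pt e.1.2 := by
      intro e heq
      apply hx₁q e
      show (∑ a : Fin d, (x₁ (e.1.1, a) - x₁ (e.1.2, a)) ^ 2) = 0
      refine Finset.sum_eq_zero fun a _ => ?_
      have h6 : x₁ (e.1.1, a) = x₁ (e.1.2, a) := congrFun heq a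
      rw [h6, sub_self]
      norm_num
    have hptd : ∀ m l : Fin n, m ≠ l → pt m ≠ pt l := by
      intro m l hml
      rcases lt_or_gt_of_ne hml with h | h
      · exact hedgept ⟨(m, l), h⟩
      · exact (hedgept ⟨(l, m), h⟩).symm
    set cfg : (Fin d → ℝ) → (Fin n × Fin d) → ℝ :=
      fun y w => if w.1 = j0 then y w.2 else x₁ w with hcfg
    set Ω : Set (Fin d → ℝ) := {y | ∀ m : Fin n, m ≠ j0 → y ≠ pt m} with hΩdef
    -- case computations for qv on configurations moved at j0
    have hcase0 : ∀ e : Edge n, e.1.1 ≠ j0 → e.1.2 ≠ j0 → ∀ y, qv e (cfg y) = qv e x₁ := by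
      intro e h1 h2 y
      refine Finset.sum_congr rfl fun a _ => ?_
      show (cfg y (e.1.1, a) - cfg y (e.1.2, a)) ^ 2 = _
      rw [show cfg y (e.1.1, a) = x₁ (e.1.1, a) from if_neg h1,
        show cfg y (e.1.2, a) = x₁ (e.1.2, a) from if_neg h2]
    have hcase1 : ∀ e : Edge n, e.1.1 = j0 →
        ∀ y, qv e (cfg y) = ∑ a : Fin d, (y a - pt e.1.2 a) ^ 2 := by
      intro e h1 y
      have h2 : e.1.2 ≠ j0 := by
        have := e.2; intro hc; rw [h1, hc] at this; exact lt_irrefl _ this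
      refine Finset.sum_congr rfl fun a _ => ?_
      show (cfg y (e.1.1, a) - cfg y (e.1.2, a)) ^ 2 = _
      rw [show cfg y (e.1.1, a) = y a from if_pos h1,
        show cfg y (e.1.2, a) = x₁ (e.1.2, a) from if_neg h2]
    have hcase2 : ∀ e : Edge n, e.1.2 = j0 →
        ∀ y, qv e (cfg y) = ∑ a : Fin d, (pt e.1.1 a - y a) ^ 2 := by
      intro e h2 y
      have h1 : e.1.1 ≠ j0 := by
        have := e.2; intro hc; rw [h2] at this; rw [hc] at this; exact lt_irrefl _ this
      refine Finset.sum_congr rfl fun a _ => ?_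
      show (cfg y (e.1.1, a) - cfg y (e.1.2, a)) ^ 2 = _
      rw [show cfg y (e.1.1, a) = x₁ (e.1.1, a) from if_neg h1,
        show cfg y (e.1.2, a) = y a from if_pos h2]
    have hqpos : ∀ e : Edge n, ∀ y ∈ Ω, 0 < qv e (cfg y) := by
      intro e y hy
      by_cases h1 : e.1.1 = j0
      · have h2 : e.1.2 ≠ j0 := by
          have := e.2; intro hc; rw [h1, hc] at this; exact lt_irrefl _ this
        rw [hcase1 e h1 y]
        exact possq y (pt e.1.2) (hy e.1.2 h2)
      · by_cases h2 : e.1.2 = j0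
        · rw [hcase2 e h2 y]
          exact possq (pt e.1.1) y (Ne.symm (hy e.1.1 h1))
        · rw [hcase0 e h1 h2 y]
          exact lt_of_le_of_ne (hqv0 e x₁) (Ne.symm (hx₁q e))
    -- analyticity of the sign-pattern sum on Ω
    have hganal : AnalyticOnNhd ℝ (fun y => fT T₀ (cfg y)) Ω := by
      intro y hy
      show AnalyticAt ℝ (fun y => ∑ e : Edge n,
        ((Stmt16Aux.sg T₀ e * β e : ℚ) : ℝ) * Real.sqrt (qv e (cfg y))) y
      apply Finset.analyticAt_fun_sum
      intro e _
      apply AnalyticAt.mul analyticAt_const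
      have hinner : AnalyticAt ℝ (fun y' : Fin d → ℝ => aeval (cfg y') (qp e)) y := by
        apply AnalyticAt.aeval_mvPolynomial
        intro w
        by_cases hw : w.1 = j0
        · have h7 : (fun y' : Fin d → ℝ => cfg y' w) = fun y' : Fin d → ℝ => y' w.2 := by
            funext y'; exact if_pos hw
          rw [h7]
          exact (ContinuousLinearMap.proj w.2 : ((Fin d → ℝ)) →L[ℝ] ℝ).analyticAt y
        · have h7 : (fun y' : Fin d → ℝ => cfg y' w) = fun _ : Fin d → ℝ => x₁ w := by
            funext y'; exact if_neg hw
          rw [h7]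
          exact analyticAt_const
      have hinner' : AnalyticAt ℝ (fun y' : Fin d → ℝ => qv e (cfg y')) y := by
        have h8 : (fun y' : Fin d → ℝ => qv e (cfg y'))
            = fun y' : Fin d → ℝ => aeval (cfg y') (qp e) := by
          funext y'; rw [hqp]
        rw [h8]; exact hinner
      have hsq : AnalyticAt ℝ Real.sqrt (qv e (cfg y)) :=
        (Real.contDiffAt_sqrt (n := (⊤ : WithTop ℕ∞)) (ne_of_gt (hqpos e y hy))).analyticAt
      have hcompa := AnalyticAt.comp (g := Real.sqrt)
        (f := fun y' : Fin d → ℝ => qv e (cfg y')) (x := y) hsq hinner'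
      exact hcompa
    -- Ω is open and preconnected
    have hSfin : (pt '' {m | m ≠ j0}).Finite := Set.Finite.image _ (Set.toFinite _)
    have hΩc : Ω = (pt '' {m | m ≠ j0})ᶜ := by
      ext y
      simp only [hΩdef, Set.mem_setOf_eq, Set.mem_compl_iff, Set.mem_image, not_exists, not_and]
      constructor
      · intro h m hm heq; exact h m hm heq.symm
      · intro h m hm heq; exact h m hm heq.symm
    have hrank : 1 < Module.rank ℝ (Fin d → ℝ) := by
      rw [rank_fun', Fintype.card_fin]
      have h9 : (1:ℕ) < d := by omega
      exact_mod_cast h9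
    have hconn : IsPreconnected Ω := by
      rw [hΩc]
      exact (hSfin.countable.isPathConnected_compl_of_one_lt_rank
        hrank).isConnected.isPreconnected
    have hy₁Ω : pt j0 ∈ Ω := fun m hm => hptd j0 m (Ne.symm hm)
    -- vanishing near pt j0
    have hgball : ∀ y ∈ Metric.ball (pt j0) ρ, fT T₀ (cfg y) = 0 := by
      intro y hyb
      apply hballZ
      rw [dist_pi_lt_iff hρ]
      intro w
      by_cases hw : w.1 = j0
      · have h1 : cfg y w = y w.2 := if_pos hw
        have h2 : x₁ w = pt j0 w.2 := by
          rw [hpt]; show x₁ w = x₁ (j0, w.2); congr 1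
          exact Prod.ext hw rfl
        rw [h1, h2]
        exact lt_of_le_of_lt (dist_le_pi_dist y (pt j0) w.2) (Metric.mem_ball.1 hyb)
      · have h1 : cfg y w = x₁ w := if_neg hw
        rw [h1, dist_self]; exact hρ
    have hEqOn : Set.EqOn (fun y => fT T₀ (cfg y)) 0 Ω :=
      hganal.eqOn_zero_of_preconnected_of_eventuallyEq_zero hconn hy₁Ω
        (Filter.eventually_of_mem (Metric.ball_mem_nhds _ hρ) hgball)
    -- the line through pt i0 in direction u
    set u : Fin d → ℝ := fun a => pt j0 a - pt i0 a with hudef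
    have hu0 : u ≠ 0 := by
      intro h
      apply hptd j0 i0 (Ne.symm hijne)
      funext a
      have := congrFun h a
      simp only [hudef, Pi.zero_apply] at this
      linarith
    set s : ℝ := Real.sqrt (∑ a : Fin d, u a ^ 2) with hsdef
    have hsum_u_pos : 0 < ∑ a : Fin d, u a ^ 2 := by
      have := possq (pt j0) (pt i0) (hptd j0 i0 (Ne.symm hijne))
      exact this
    have hspos : 0 < s := Real.sqrt_pos.2 hsum_u_pos
    set Y : ℝ → (Fin d → ℝ) := fun t a => pt i0 a + t * u a with hYdef
    have hY0 : Y 0 = pt i0 := by funext a; simp [hYdef]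
    have hΩ'fin : (pt '' {m | m ≠ j0 ∧ m ≠ i0}).Finite := Set.Finite.image _ (Set.toFinite _)
    have hΩ'open : IsOpen (pt '' {m | m ≠ j0 ∧ m ≠ i0})ᶜ := hΩ'fin.isClosed.isOpen_compl
    have hYc : Continuous Y := by
      apply continuous_pi
      intro a
      exact continuous_const.add (continuous_id.mul continuous_const)
    have h0mem : (0:ℝ) ∈ Y ⁻¹' (pt '' {m | m ≠ j0 ∧ m ≠ i0})ᶜ := by
      rw [Set.mem_preimage, hY0]
      intro hmem
      obtain ⟨m, ⟨hm1, hm2⟩, hm3⟩ := hmem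
      exact hptd m i0 hm2 hm3
    obtain ⟨τ, hτ, hτball⟩ := Metric.isOpen_iff.1 (hΩ'open.preimage hYc) 0 h0mem
    have hYΩ : ∀ t : ℝ, t ≠ 0 → |t| < τ → Y t ∈ Ω := by
      intro t ht htτ m hm heq
      by_cases hmi : m = i0
      · subst hmi
        apply hu0
        funext a
        have h10 := congrFun heq a
        simp only [hYdef] at h10
        have h11 : t * u a = 0 := by
          have h12 : pt m a + t * u a = pt m a := h10
          linarith
        have := (mul_eq_zero.1 h11).resolve_left ht
        simpa using this
      · have hYt : Y t ∈ (pt '' {m | m ≠ j0 ∧ m ≠ i0})ᶜ := by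
          apply hτball
          rw [Metric.mem_ball, Real.dist_eq, sub_zero]
          exact htτ
        exact hYt ⟨m, ⟨hm, hmi⟩, heq.symm⟩
    -- the punctured-line identity
    set δ : ℝ := ((Stmt16Aux.sg T₀ E0 * β E0 : ℚ) : ℝ) with hδdef
    set φ : ℝ → ℝ := fun t => ∑ e ∈ Finset.univ.erase E0,
      ((Stmt16Aux.sg T₀ e * β e : ℚ) : ℝ) * Real.sqrt (qv e (cfg (Y t))) with hφdef
    have hqe0 : ∀ t : ℝ, qv E0 (cfg (Y t)) = t ^ 2 * (∑ a : Fin d, u a ^ 2) := by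
      intro t
      rw [hcase2 E0 rfl (Y t), Finset.mul_sum]
      refine Finset.sum_congr rfl fun a _ => ?_
      have h13 : pt E0.1.1 a - Y t a = -(t * u a) := by
        show pt i0 a - (pt i0 a + t * u a) = -(t * u a)
        ring
      rw [h13]
      ring
    have hline : ∀ t : ℝ, t ≠ 0 → |t| < τ → δ * (|t| * s) + φ t = 0 := by
      intro t ht htτ
      have h1 := hEqOn (hYΩ t ht htτ)
      simp only [Pi.zero_apply] at h1
      have h2 : fT T₀ (cfg (Y t)) = δ * Real.sqrt (qv E0 (cfg (Y t))) + φ t :=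
        (Finset.add_sum_erase _ _ (Finset.mem_univ E0)).symm
      have h3 : Real.sqrt (qv E0 (cfg (Y t))) = |t| * s := by
        rw [hqe0, Real.sqrt_mul (sq_nonneg t), Real.sqrt_sq_eq_abs, hsdef]
      rw [h2, h3] at h1
      exact h1
    -- differentiability of φ at 0
    have hφ0pos : ∀ e : Edge n, e ∈ Finset.univ.erase E0 → 0 < qv e (cfg (Y 0)) := by
      intro e he
      rw [hY0]
      by_cases h1 : e.1.1 = j0
      · rw [hcase1 e h1 (pt i0)]
        have h2 : e.1.2 ≠ i0 := by
          have h14 := e.2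
          rw [h1] at h14
          intro hc; rw [hc] at h14
          exact absurd (hijlt.trans h14) (lt_irrefl _)
        exact possq (pt i0) (pt e.1.2) (hptd i0 e.1.2 (Ne.symm h2))
      · by_cases h2 : e.1.2 = j0
        · rw [hcase2 e h2 (pt i0)]
          have h15 : e.1.1 ≠ i0 := by
            intro hc
            apply Finset.ne_of_mem_erase he
            apply Subtype.ext
            exact Prod.ext hc h2
          exact possq (pt e.1.1) (pt i0) (hptd e.1.1 i0 h15)
        · rw [hcase0 e h1 h2 (pt i0)]
          exact lt_of_le_of_ne (hqv0 e x₁) (Ne.symm (hx₁q e))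
    have hcomp : ∀ w : Fin n × Fin d, DifferentiableAt ℝ (fun t => cfg (Y t) w) 0 := by
      intro w
      by_cases hw : w.1 = j0
      · have h7 : (fun t : ℝ => cfg (Y t) w) = fun t : ℝ => pt i0 w.2 + t * u w.2 := by
          funext t; exact if_pos hw
        rw [h7]
        exact (differentiableAt_const _).add (differentiableAt_id.mul (differentiableAt_const _))
      · have h7 : (fun t : ℝ => cfg (Y t) w) = fun _ : ℝ => x₁ w := by
          funext t; exact if_neg hw
        rw [h7]
        exact differentiableAt_const _
    have hφdiff : DifferentiableAt ℝ φ 0 := by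
      apply DifferentiableAt.fun_sum
      intro e he
      apply DifferentiableAt.const_mul
      apply DifferentiableAt.sqrt (f := fun t : ℝ => qv e (cfg (Y t))) ?_
        (ne_of_gt (hφ0pos e he))
      show DifferentiableAt ℝ (fun t => ∑ a : Fin d,
        (cfg (Y t) (e.1.1, a) - cfg (Y t) (e.1.2, a)) ^ 2) 0
      apply DifferentiableAt.fun_sum
      intro a _
      exact ((hcomp (e.1.1, a)).sub (hcomp (e.1.2, a))).pow 2
    -- compute φ on both sides of 0
    have hτ2 : ∀ t : ℝ, t ≠ 0 → |t| < τ → φ t = -(δ * (|t| * s)) := by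
      intro t ht htτ
      have := hline t ht htτ
      linarith
    have hφzero : φ 0 = 0 := by
      have h1 : Filter.Tendsto φ (nhdsWithin 0 (Set.Ioi 0)) (nhds (φ 0)) :=
        (hφdiff.continuousAt.tendsto).mono_left nhdsWithin_le_nhds
      have h2 : Filter.Tendsto (fun t : ℝ => -(δ * (|t| * s)))
          (nhdsWithin 0 (Set.Ioi 0)) (nhds 0) := by
        have hcontm : Continuous (fun t : ℝ => -(δ * (|t| * s))) :=
          (continuous_const.mul (continuous_abs.mul continuous_const)).neg
        have := (hcontm.tendsto 0).mono_left (nhdsWithin_le_nhds (s := Set.Ioi (0:ℝ)))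
        simpa using this
      have h3 : φ =ᶠ[nhdsWithin (0:ℝ) (Set.Ioi 0)] fun t => -(δ * (|t| * s)) := by
        filter_upwards [Ioo_mem_nhdsGT_of_mem (Set.left_mem_Ico.2 hτ)] with t ht
        exact hτ2 t (ne_of_gt ht.1) (by rw [abs_of_pos ht.1]; exact ht.2)
      exact tendsto_nhds_unique (h1.congr' h3) h2
    have hL := hφdiff.hasDerivAt
    rw [hasDerivAt_iff_tendsto_slope] at hL
    have hslope : ∀ t : ℝ, t ≠ 0 → |t| < τ → slope φ 0 t = -(δ * s * (|t| / t)) := by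
      intro t ht htτ
      rw [slope_def_field, hφzero, hτ2 t ht htτ]
      field_simp
      ring
    have hLpos : deriv φ 0 = -(δ * s) := by
      have hmono : Filter.Tendsto (slope φ 0) (nhdsWithin 0 (Set.Ioi 0)) (nhds (deriv φ 0)) :=
        hL.mono_left (nhdsWithin_mono _ (fun t ht => ne_of_gt ht))
      have h3 : slope φ 0 =ᶠ[nhdsWithin (0:ℝ) (Set.Ioi 0)] fun _ => -(δ * s) := by
        filter_upwards [Ioo_mem_nhdsGT_of_mem (Set.left_mem_Ico.2 hτ)] with t ht
        rw [hslope t (ne_of_gt ht.1) (by rw [abs_of_pos ht.1]; exact ht.2),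
          abs_of_pos ht.1, div_self (ne_of_gt ht.1), mul_one]
      exact tendsto_nhds_unique (hmono.congr' h3) tendsto_const_nhds
    have hLneg : deriv φ 0 = δ * s := by
      have hmono : Filter.Tendsto (slope φ 0) (nhdsWithin 0 (Set.Iio 0)) (nhds (deriv φ 0)) :=
        hL.mono_left (nhdsWithin_mono _ (fun t ht => ne_of_lt ht))
      have h3 : slope φ 0 =ᶠ[nhdsWithin (0:ℝ) (Set.Iio 0)] fun _ => δ * s := by
        filter_upwards [Ioo_mem_nhdsLT_of_mem (Set.right_mem_Ioc.2 (neg_neg_iff_pos.2 hτ))]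
          with t ht
        have ht0 : t < 0 := ht.2
        have habs : |t| = -t := abs_of_neg ht0
        rw [hslope t (ne_of_lt ht0) (by rw [habs]; linarith [ht.1]), habs,
          neg_div, div_self (ne_of_lt ht0), ]
        ring
      exact tendsto_nhds_unique (hmono.congr' h3) tendsto_const_nhds
    have hδ0 : δ = 0 := by
      have h9 : δ * s = 0 := by
        have := hLpos.symm.trans hLneg
        linarith
      rcases mul_eq_zero.1 h9 with h | h
      · exact h
      · exact absurd h (ne_of_gt hspos)
    rw [hδdef] at hδ0
    have hq0 : (Stmt16Aux.sg T₀ E0 * β E0 : ℚ) = 0 := by exact_mod_cast hδ0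
    rcases mul_eq_zero.1 hq0 with h | h
    · exfalso
      revert h
      unfold Stmt16Aux.sg
      split <;> norm_num
    · exact h
  funext e0
  have h := hβ0 e0
  show (∑ i, c i • α i) e0 = 0
  rw [Finset.sum_apply]
  simp only [Pi.smul_apply, smul_eq_mul]
  exact h
end
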